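/- Intra-cluster repairable codes meet the locally-repairable-code bound with equality under the stated condition: for l_0 = n_I − 1, m_0 = n − k + 1, and α = M/(k − ⌊k/n_I⌋), the inequality m_0 ≤ n − ⌈M/α⌉ − ⌈M/(l_0·α)⌉ + 2 holds, with equality if k mod n_I ≠ 0. Equivalently: 0 ≤ ⌊k/n_I⌋ − ⌈(k − ⌊k/n_I⌋)/(n_I − 1)⌉ + 1, with equality iff k mod n_I ≠ 0. -/

import Mathlib

/-- Intra-cluster repairable codes meet the LRC bound: with `l_0 = n_I − 1`,
`m_0 = n − k + 1` and `α = M/(k − ⌊k/n_I⌋)`, one has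
`m_0 ≤ n − ⌈M/α⌉ − ⌈M/(l_0·α)⌉ + 2`, with equality if `k % n_I ≠ 0`. -/
theorem irc_lrc_bound (n nI k : ℕ) (M : ℝ) (hnI : 2 ≤ nI) (hk : nI < k) (hkn : k ≤ n)
    (hM : 0 < M) :
    ((n : ℤ) - k + 1)
      ≤ (n : ℤ) - ⌈M / (M / ((k : ℝ) - ((k / nI : ℕ) : ℝ)))⌉
          - ⌈M / (((nI : ℝ) - 1) * (M / ((k : ℝ) - ((k / nI : ℕ) : ℝ))))⌉ + 2 ∧
    (k % nI ≠ 0 →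
      ((n : ℤ) - k + 1)
        = (n : ℤ) - ⌈M / (M / ((k : ℝ) - ((k / nI : ℕ) : ℝ)))⌉
            - ⌈M / (((nI : ℝ) - 1) * (M / ((k : ℝ) - ((k / nI : ℕ) : ℝ))))⌉ + 2) := by
  set q : ℕ := k / nI with hq
  set r : ℕ := k % nI with hr
  have hk0 : 0 < k := lt_trans (by omega) hk
  have hqk : q < k := Nat.div_lt_self hk0 (by omega)
  have hdm : nI * q + r = k := Nat.div_add_mod k nI
  have hrlt : r < nI := Nat.mod_lt k (by omega)
  set x : ℝ := (k : ℝ) - (q : ℝ) with hx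
  have hx0 : 0 < x := by
    have : (q : ℝ) < (k : ℝ) := by exact_mod_cast hqk
    linarith
  have hMne : M ≠ 0 := ne_of_gt hM
  have hxne : x ≠ 0 := ne_of_gt hx0
  have hn1 : (0 : ℝ) < (nI : ℝ) - 1 := by
    have : (2 : ℝ) ≤ (nI : ℝ) := by exact_mod_cast hnI
    linarith
  have hn1ne : ((nI : ℝ) - 1) ≠ 0 := ne_of_gt hn1
  have e1 : M / (M / x) = x := by field_simp
  have e2 : M / (((nI : ℝ) - 1) * (M / x)) = x / ((nI : ℝ) - 1) := by
    field_simp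
  have c1 : ⌈M / (M / x)⌉ = (k : ℤ) - q := by
    rw [e1, hx]
    exact_mod_cast Int.ceil_intCast (R := ℝ) ((k : ℤ) - (q : ℤ))
  have hub : x / ((nI : ℝ) - 1) ≤ ((q : ℝ) + 1) := by
    rw [div_le_iff₀ hn1]
    have hk' : (nI : ℝ) * q + r = k := by exact_mod_cast hdm
    have hr' : (r : ℝ) ≤ (nI : ℝ) - 1 := by
      have : (r : ℝ) < (nI : ℝ) := by exact_mod_cast hrlt
      have : (r : ℝ) + 1 ≤ (nI : ℝ) := by
        exact_mod_cast Nat.succ_le_of_lt hrlt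
      linarith
    rw [hx]; nlinarith
  have cle : ⌈M / (((nI : ℝ) - 1) * (M / x))⌉ ≤ (q : ℤ) + 1 := by
    rw [e2]
    refine Int.ceil_le.mpr ?_
    push_cast
    exact hub
  constructor
  · rw [c1]
    have : ((n : ℤ) : ℤ) - ((k : ℤ) - q) -
        ⌈M / (((nI : ℝ) - 1) * (M / x))⌉ + 2 ≥ (n : ℤ) - k + 1 := by
      have hq' : (q : ℤ) ≥ 0 := Int.ofNat_nonneg q
      omega
    exact this
  · intro hrne
    have hr1 : 1 ≤ r := Nat.one_le_iff_ne_zero.mpr hrne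
    have c2 : ⌈M / (((nI : ℝ) - 1) * (M / x))⌉ = (q : ℤ) + 1 := by
      rw [e2]
      refine Int.ceil_eq_iff.mpr ⟨?_, ?_⟩
      · push_cast
        have : (q : ℝ) * ((nI : ℝ) - 1) < x := by
          have hk' : (nI : ℝ) * q + r = k := by exact_mod_cast hdm
          have : (1 : ℝ) ≤ (r : ℝ) := by exact_mod_cast hr1
          rw [hx]; nlinarith
        have := (lt_div_iff₀ hn1).mpr this
        linarith
      · push_cast; exact hub
    rw [c1, c2]
    omega
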